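/- arXiv:2411.18989 — 3 statements merged into one kernel-verified Lean document; each statement's English description precedes it below -/
import Mathlib

section
/- Let (K, k, k**) define a joint Gaussian with block covariance [[k**, kᵀ],[k, K]] where K ∈ ℝ^{n×n} is positive definite. Let O be an orthogonal D×D matrix. If one replaces the data vector y ∈ ℝ^{nD} by (I_n ⊗ Oᵀ) y in the coregionalization model with Gram matrix K ⊗ B replaced by K ⊗ (Oᵀ B O), then the posterior mean β and posterior covariance Σ transform as β ↦ Oᵀ β and Σ ↦ Oᵀ Σ O. In particular the frame-independent quantities Eᵀβ and EᵀΣE are invariant under the frame change E ↦ Oᵀ E. -/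
open Matrix
open scoped Kronecker

noncomputable section

/-- The `D × nD` matrix `k*ᵀ ⊗ B` of the coregionalization model. -/
def coregCross {n D : ℕ} (kstar : Fin n → ℝ) (B : Matrix (Fin D) (Fin D) ℝ) :
    Matrix (Fin D) (Fin n × Fin D) ℝ :=
  Matrix.of fun d p => kstar p.1 * B d p.2

/-- Posterior mean `β = (k*ᵀ ⊗ B)(K ⊗ B)⁻¹ y` of the coregionalization GP model. -/
def coregMean {n D : ℕ} (K : Matrix (Fin n) (Fin n) ℝ) (B : Matrix (Fin D) (Fin D) ℝ)
    (kstar : Fin n → ℝ) (y : Fin n × Fin D → ℝ) : Fin D → ℝ :=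
  (coregCross kstar B).mulVec ((K ⊗ₖ B)⁻¹.mulVec y)

/-- Posterior covariance `Σ = k**·B − (k*ᵀ ⊗ B)(K ⊗ B)⁻¹(k*ᵀ ⊗ B)ᵀ`. -/
def coregCov {n D : ℕ} (K : Matrix (Fin n) (Fin n) ℝ) (B : Matrix (Fin D) (Fin D) ℝ)
    (kstar : Fin n → ℝ) (kss : ℝ) : Matrix (Fin D) (Fin D) ℝ :=
  kss • B - coregCross kstar B * (K ⊗ₖ B)⁻¹ * (coregCross kstar B)ᵀ

lemma cross_transform {n D : ℕ} (kstar : Fin n → ℝ) (B O : Matrix (Fin D) (Fin D) ℝ) :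
    coregCross kstar (Oᵀ * B * O) =
      Oᵀ * coregCross kstar B * ((1 : Matrix (Fin n) (Fin n) ℝ) ⊗ₖ O) := by
  ext d p
  simp [coregCross, Matrix.mul_apply, Fintype.sum_prod_type, Matrix.one_apply,
    Finset.sum_mul, Finset.mul_sum]
  exact Finset.sum_congr rfl fun i _ => Finset.sum_congr rfl fun x _ => by ring

lemma kron_inv_transform {n D : ℕ} (K : Matrix (Fin n) (Fin n) ℝ)
    (B O : Matrix (Fin D) (Fin D) ℝ) (hO : Oᵀ * O = 1) :
    (K ⊗ₖ (Oᵀ * B * O))⁻¹ =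
      ((1 : Matrix (Fin n) (Fin n) ℝ) ⊗ₖ Oᵀ) * (K ⊗ₖ B)⁻¹ *
        ((1 : Matrix (Fin n) (Fin n) ℝ) ⊗ₖ O) := by
  have hO' : O * Oᵀ = 1 := mul_eq_one_comm.mp hO
  have h1 : (((1 : Matrix (Fin n) (Fin n) ℝ) ⊗ₖ O))⁻¹ = (1 : Matrix (Fin n) (Fin n) ℝ) ⊗ₖ Oᵀ := by
    apply Matrix.inv_eq_left_inv
    rw [← Matrix.mul_kronecker_mul, hO, Matrix.one_mul, Matrix.one_kronecker_one]
  have h2 : (((1 : Matrix (Fin n) (Fin n) ℝ) ⊗ₖ Oᵀ))⁻¹ = (1 : Matrix (Fin n) (Fin n) ℝ) ⊗ₖ O := by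
    apply Matrix.inv_eq_left_inv
    rw [← Matrix.mul_kronecker_mul, hO', Matrix.one_mul, Matrix.one_kronecker_one]
  have key : K ⊗ₖ (Oᵀ * B * O) =
      ((1 : Matrix (Fin n) (Fin n) ℝ) ⊗ₖ Oᵀ) * (K ⊗ₖ B) * ((1 : Matrix (Fin n) (Fin n) ℝ) ⊗ₖ O) := by
    rw [← Matrix.mul_kronecker_mul, ← Matrix.mul_kronecker_mul, Matrix.one_mul, Matrix.mul_one]
  rw [key, Matrix.mul_inv_rev, Matrix.mul_inv_rev, h1, h2, Matrix.mul_assoc]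

/-- Frame invariance (Theorem 3): replacing the data `y` by `(I_n ⊗ Oᵀ) y` and the
coregionalization matrix `B` by `Oᵀ B O`, for an orthogonal matrix `O`, transforms the
posterior mean by `β ↦ Oᵀ β` and the posterior covariance by `Σ ↦ Oᵀ Σ O`; consequently
the frame-independent tangent vector `Eᵀβ = ∑ d, β d • E d` is invariant under the frame
change `E ↦ Oᵀ E`. -/
theorem coreg_frame_invariance
    {n D : ℕ} (K : Matrix (Fin n) (Fin n) ℝ) (hK : K.PosDef)
    (B : Matrix (Fin D) (Fin D) ℝ) (hB : B.PosDef)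
    (kstar : Fin n → ℝ) (kss : ℝ) (y : Fin n × Fin D → ℝ)
    (O : Matrix (Fin D) (Fin D) ℝ) (hO : Oᵀ * O = 1)
    {V : Type*} [AddCommGroup V] [Module ℝ V] (E : Fin D → V) :
    coregMean K (Oᵀ * B * O) kstar (fun p => ∑ e, Oᵀ p.2 e * y (p.1, e)) =
        Oᵀ.mulVec (coregMean K B kstar y) ∧
      coregCov K (Oᵀ * B * O) kstar kss = Oᵀ * coregCov K B kstar kss * O ∧
      ∑ d, coregMean K (Oᵀ * B * O) kstar (fun p => ∑ e, Oᵀ p.2 e * y (p.1, e)) d •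
          (∑ e, Oᵀ d e • E e) =
        ∑ d, coregMean K B kstar y d • E d := by
  have hO' : O * Oᵀ = 1 := mul_eq_one_comm.mp hO
  have h1n : ((1 : Matrix (Fin n) (Fin n) ℝ) ⊗ₖ O) * ((1 : Matrix (Fin n) (Fin n) ℝ) ⊗ₖ Oᵀ)
      = 1 := by
    rw [← Matrix.mul_kronecker_mul, hO', Matrix.one_mul, Matrix.one_kronecker_one]
  have hy : (fun p : Fin n × Fin D => ∑ e, Oᵀ p.2 e * y (p.1, e)) =
      ((1 : Matrix (Fin n) (Fin n) ℝ) ⊗ₖ Oᵀ).mulVec y := by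
    ext p
    simp [Matrix.mulVec, dotProduct, Fintype.sum_prod_type, Matrix.one_apply,
      ite_mul]
  have hmean : coregMean K (Oᵀ * B * O) kstar (fun p => ∑ e, Oᵀ p.2 e * y (p.1, e)) =
      Oᵀ.mulVec (coregMean K B kstar y) := by
    rw [hy]
    unfold coregMean
    rw [cross_transform, kron_inv_transform K B O hO]
    simp only [Matrix.mulVec_mulVec]
    congr 1
    simp only [Matrix.mul_assoc]
    rw [← Matrix.mul_assoc ((1 : Matrix (Fin n) (Fin n) ℝ) ⊗ₖ O)
        ((1 : Matrix (Fin n) (Fin n) ℝ) ⊗ₖ Oᵀ), h1n, Matrix.one_mul, Matrix.mul_one]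
  have hcov : coregCov K (Oᵀ * B * O) kstar kss = Oᵀ * coregCov K B kstar kss * O := by
    unfold coregCov
    rw [cross_transform, kron_inv_transform K B O hO]
    rw [Matrix.transpose_mul, Matrix.transpose_mul, Matrix.transpose_transpose]
    simp only [Matrix.mul_sub, Matrix.sub_mul, Matrix.smul_mul, Matrix.mul_smul]
    congr 1
    rw [show ((1 : Matrix (Fin n) (Fin n) ℝ) ⊗ₖ O)ᵀ = (1 : Matrix (Fin n) (Fin n) ℝ) ⊗ₖ Oᵀ by
      rw [← Matrix.kroneckerMap_transpose, Matrix.transpose_one]]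
    simp only [Matrix.mul_assoc]
    rw [← Matrix.mul_assoc ((1 : Matrix (Fin n) (Fin n) ℝ) ⊗ₖ O)
        ((1 : Matrix (Fin n) (Fin n) ℝ) ⊗ₖ Oᵀ), h1n, Matrix.one_mul,
      ← Matrix.mul_assoc ((1 : Matrix (Fin n) (Fin n) ℝ) ⊗ₖ O)
        ((1 : Matrix (Fin n) (Fin n) ℝ) ⊗ₖ Oᵀ), h1n, Matrix.one_mul]
  refine ⟨hmean, hcov, ?_⟩
  rw [hmean]
  set β := coregMean K B kstar y with hβ
  have key : ∀ e, ∑ d, Oᵀ.mulVec β d * Oᵀ d e = β e := by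
    intro e
    have h1 : ∑ d, Oᵀ.mulVec β d * Oᵀ d e = O.mulVec (Oᵀ.mulVec β) e := by
      simp [Matrix.mulVec, dotProduct, Matrix.transpose_apply, mul_comm]
    rw [h1, Matrix.mulVec_mulVec, hO', Matrix.one_mulVec]
  calc ∑ d, Oᵀ.mulVec β d • (∑ e, Oᵀ d e • E e)
      = ∑ d, ∑ e, (Oᵀ.mulVec β d * Oᵀ d e) • E e := by
        simp [Finset.smul_sum, smul_smul]
    _ = ∑ e, (∑ d, Oᵀ.mulVec β d * Oᵀ d e) • E e := by
        rw [Finset.sum_comm]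
        simp [Finset.sum_smul]
    _ = ∑ e, β e • E e := by
        simp only [key]

end
end

section
/- The posterior predictive variance in GP regression is monotonically nonincreasing in the data: for σ² > 0 and a psd kernel k, adding an extra training point x_{n+1} cannot increase the posterior variance at any test point x*, i.e., k(x*,x*) − k_{n+1}*ᵀ (K_{n+1} + σ²I)⁻¹ k_{n+1}* ≤ k(x*,x*) − k_n*ᵀ (K_n + σ²I)⁻¹ k_n*. -/
open Matrix

private lemma quad_le_inv {m : ℕ} {A : Matrix (Fin m) (Fin m) ℝ} (hA : A.PosDef)
    (v w : Fin m → ℝ) :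
    2 * (w ⬝ᵥ v) - w ⬝ᵥ A.mulVec w ≤ v ⬝ᵥ A⁻¹.mulVec v := by
  have hdet : IsUnit A.det := (Matrix.isUnit_iff_isUnit_det A).mp hA.isUnit
  set p : Fin m → ℝ := A⁻¹.mulVec v with hp
  have hAp : A.mulVec p = v := by
    rw [hp, Matrix.mulVec_mulVec, Matrix.mul_nonsing_inv _ hdet, Matrix.one_mulVec]
  have h0 : 0 ≤ (w - p) ⬝ᵥ A.mulVec (w - p) := by
    have := hA.posSemidef.dotProduct_mulVec_nonneg (w - p)
    simpa using this
  have hsymmA : Aᵀ = A := by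
    have h := hA.isHermitian
    rw [Matrix.IsHermitian] at h
    simpa [Matrix.conjTranspose_eq_transpose_of_trivial] using h
  have hpAw : p ⬝ᵥ A.mulVec w = w ⬝ᵥ v := by
    rw [Matrix.dotProduct_mulVec, ← Matrix.mulVec_transpose, hsymmA, hAp, dotProduct_comm]
  have hexp : (w - p) ⬝ᵥ A.mulVec (w - p)
      = w ⬝ᵥ A.mulVec w - 2 * (w ⬝ᵥ v) + v ⬝ᵥ A⁻¹.mulVec v := by
    rw [Matrix.mulVec_sub, sub_dotProduct, dotProduct_sub, dotProduct_sub, hAp, hpAw]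
    have h1 : p ⬝ᵥ v = v ⬝ᵥ A⁻¹.mulVec v := by rw [hp, dotProduct_comm]
    rw [h1]
    ring
  nlinarith [h0, hexp]

private lemma inv_quad_eq {m : ℕ} {A : Matrix (Fin m) (Fin m) ℝ} (hA : A.PosDef)
    (v : Fin m → ℝ) :
    v ⬝ᵥ A⁻¹.mulVec v
      = 2 * ((A⁻¹.mulVec v) ⬝ᵥ v) - (A⁻¹.mulVec v) ⬝ᵥ A.mulVec (A⁻¹.mulVec v) := by
  have hdet : IsUnit A.det := (Matrix.isUnit_iff_isUnit_det A).mp hA.isUnit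
  have hAp : A.mulVec (A⁻¹.mulVec v) = v := by
    rw [Matrix.mulVec_mulVec, Matrix.mul_nonsing_inv _ hdet, Matrix.one_mulVec]
  rw [hAp, dotProduct_comm]
  ring

/-- Monotonicity of the GP posterior predictive variance in the data: adding an
extra training point cannot increase the posterior variance at any test point. -/
theorem posterior_variance_antitone
    {X : Type*} (k : X → X → ℝ)
    (hsymm : ∀ x y, k x y = k y x)
    (hpsd : ∀ (m : ℕ) (x : Fin m → X),
      (Matrix.of fun i j => k (x i) (x j) : Matrix (Fin m) (Fin m) ℝ).PosSemidef)
    (σ2 : ℝ) (hσ : 0 < σ2)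
    (n : ℕ) (x : Fin (n + 1) → X) (xstar : X) :
    k xstar xstar -
        (fun i : Fin (n + 1) => k xstar (x i)) ⬝ᵥ
          ((Matrix.of fun i j => k (x i) (x j) : Matrix (Fin (n + 1)) (Fin (n + 1)) ℝ)
              + σ2 • 1)⁻¹.mulVec (fun i => k xstar (x i)) ≤
      k xstar xstar -
        (fun i : Fin n => k xstar (x i.castSucc)) ⬝ᵥ
          ((Matrix.of fun i j => k (x i.castSucc) (x j.castSucc) : Matrix (Fin n) (Fin n) ℝ)
              + σ2 • 1)⁻¹.mulVec (fun i => k xstar (x i.castSucc)) := by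
  -- abbreviations
  set Kb : Matrix (Fin (n+1)) (Fin (n+1)) ℝ := Matrix.of fun i j => k (x i) (x j) with hKb
  set Ks : Matrix (Fin n) (Fin n) ℝ :=
    Matrix.of fun i j => k (x i.castSucc) (x j.castSucc) with hKs
  have hdiagPD : ∀ (m : ℕ), ((σ2 • 1 : Matrix (Fin m) (Fin m) ℝ)).PosDef := by
    intro m
    have : (σ2 • 1 : Matrix (Fin m) (Fin m) ℝ) = Matrix.diagonal (fun _ => σ2) := by
      ext i j
      by_cases h : i = j <;> simp [Matrix.one_apply, Matrix.diagonal, h]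
    rw [this]
    exact Matrix.PosDef.diagonal fun _ => hσ
  have hAb : (Kb + σ2 • 1).PosDef :=
    Matrix.PosDef.posSemidef_add (hpsd (n+1) x) (hdiagPD (n+1))
  have hAs : (Ks + σ2 • 1).PosDef :=
    Matrix.PosDef.posSemidef_add (hpsd n (fun i => x i.castSucc)) (hdiagPD n)
  set vb : Fin (n+1) → ℝ := fun i => k xstar (x i) with hvb
  set vs : Fin n → ℝ := fun i => k xstar (x i.castSucc) with hvs
  set w : Fin n → ℝ := (Ks + σ2 • 1)⁻¹.mulVec vs with hw
  set w' : Fin (n+1) → ℝ := Fin.snoc w 0 with hw'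
  -- entries agree on the castSucc block
  have hentry : ∀ i j : Fin n,
      (Kb + σ2 • 1) i.castSucc j.castSucc = (Ks + σ2 • 1) i j := by
    intro i j
    simp [hKb, hKs, Matrix.one_apply, Fin.castSucc_inj]
  have hdot : w' ⬝ᵥ vb = w ⬝ᵥ vs := by
    simp [dotProduct, Fin.sum_univ_castSucc, hw']; rfl
  have hquad : w' ⬝ᵥ (Kb + σ2 • 1).mulVec w' = w ⬝ᵥ (Ks + σ2 • 1).mulVec w := by
    simp only [dotProduct, Matrix.mulVec, Fin.sum_univ_castSucc, hw', Fin.snoc_castSucc,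
      Fin.snoc_last, mul_zero, zero_mul, add_zero, dotProduct]
    refine Finset.sum_congr rfl fun i _ => ?_
    congr 1
    refine Finset.sum_congr rfl fun j _ => ?_
    rw [hentry]
  have key : vs ⬝ᵥ (Ks + σ2 • 1)⁻¹.mulVec vs ≤ vb ⬝ᵥ (Kb + σ2 • 1)⁻¹.mulVec vb := by
    calc vs ⬝ᵥ (Ks + σ2 • 1)⁻¹.mulVec vs
        = 2 * (w ⬝ᵥ vs) - w ⬝ᵥ (Ks + σ2 • 1).mulVec w := inv_quad_eq hAs vs
      _ = 2 * (w' ⬝ᵥ vb) - w' ⬝ᵥ (Kb + σ2 • 1).mulVec w' := by rw [hdot, hquad]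
      _ ≤ vb ⬝ᵥ (Kb + σ2 • 1)⁻¹.mulVec vb := quad_le_inv hAb vb w'
  linarith [key]
end

section
/- Let k be a bounded symmetric positive semidefinite kernel on X with associated RKHS H, and fix points x₁,…,xₙ and a test point x*. The posterior variance v(x*) = k(x*,x*) − k*ᵀ(K+σ²I)⁻¹k* equals the squared distance, in the norm ‖h‖² = ‖h‖_H² + σ⁻²Σᵢ h(xᵢ)², from k(x*,·) to the span of an appropriate finite-dimensional subspace; in particular 0 ≤ v(x*) ≤ k(x*,x*). -/
open Matrix

/-- Two-sided bound on the GP posterior predictive variance: for a bounded symmetric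
positive semidefinite kernel `k`, training points `x₁, …, xₙ`, test point `x*` and
noise variance `σ² > 0`, one has
`0 ≤ k(x*,x*) − k*ᵀ (K + σ²I)⁻¹ k* ≤ k(x*,x*)`. -/
theorem posterior_variance_two_sided_bound
    {X : Type*} (k : X → X → ℝ) (M : ℝ)
    (hbdd : ∀ x y, |k x y| ≤ M)
    (hsymm : ∀ x y, k x y = k y x)
    (hpsd : ∀ (m : ℕ) (x : Fin m → X),
      (Matrix.of fun i j => k (x i) (x j) : Matrix (Fin m) (Fin m) ℝ).PosSemidef)
    (σ2 : ℝ) (hσ : 0 < σ2)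
    (n : ℕ) (x : Fin n → X) (xstar : X) :
    0 ≤ k xstar xstar -
        (fun i => k xstar (x i)) ⬝ᵥ
          ((Matrix.of fun i j => k (x i) (x j) : Matrix (Fin n) (Fin n) ℝ)
              + σ2 • 1)⁻¹.mulVec (fun i => k xstar (x i)) ∧
      k xstar xstar -
        (fun i => k xstar (x i)) ⬝ᵥ
          ((Matrix.of fun i j => k (x i) (x j) : Matrix (Fin n) (Fin n) ℝ)
              + σ2 • 1)⁻¹.mulVec (fun i => k xstar (x i)) ≤ k xstar xstar := by
  set K : Matrix (Fin n) (Fin n) ℝ := Matrix.of fun i j => k (x i) (x j) with hK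
  set A : Matrix (Fin n) (Fin n) ℝ := K + σ2 • 1 with hA
  set kst : Fin n → ℝ := fun i => k xstar (x i) with hkst
  have hKpsd : K.PosSemidef := hpsd n x
  have hApd : A.PosDef := by
    have h1 : (σ2 • (1 : Matrix (Fin n) (Fin n) ℝ)).PosDef := by
      rw [Matrix.smul_one_eq_diagonal]
      exact Matrix.posDef_diagonal_iff.mpr fun _ => hσ
    exact Matrix.PosDef.posSemidef_add hKpsd h1
  have hAinv : A * A⁻¹ = 1 := Matrix.mul_nonsing_inv A hApd.det_pos.ne'.isUnit
  set w : Fin n → ℝ := A⁻¹.mulVec kst with hw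
  have hAw : A.mulVec w = kst := by
    rw [hw, Matrix.mulVec_mulVec, hAinv, Matrix.one_mulVec]
  -- upper bound
  have hinvpsd : (A⁻¹).PosSemidef := hApd.inv.posSemidef
  have hub : 0 ≤ kst ⬝ᵥ A⁻¹.mulVec kst := hinvpsd.dotProduct_mulVec_nonneg kst
  -- lower bound via (n+1)-point Gram matrix
  set x' : Fin (n+1) → X := Fin.cons xstar x with hx'
  set v : Fin (n+1) → ℝ := Fin.cons 1 (fun i => -w i) with hv
  have hG := (hpsd (n+1) x').dotProduct_mulVec_nonneg v
  rw [star_trivial] at hG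
  have hexpand : v ⬝ᵥ (Matrix.of fun i j => k (x' i) (x' j)).mulVec v
      = k xstar xstar - 2 * (kst ⬝ᵥ w) + w ⬝ᵥ K.mulVec w := by
    simp only [dotProduct, Matrix.mulVec, Fin.sum_univ_succ, hv, hx',
      Fin.cons_zero, Fin.cons_succ, Matrix.of_apply, hK, hkst]
    have hsym : ∀ i, k (x i) xstar = k xstar (x i) := fun i => hsymm _ _
    simp only [hsym]
    have e0 : (∑ i, k xstar (x i) * -w i) = -∑ i, k xstar (x i) * w i := by
      simp
    have e1 : ∀ i : Fin n, -w i * (k xstar (x i) * 1 + ∑ j, k (x i) (x j) * -w j)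
        = -(k xstar (x i) * w i) + w i * ∑ j, k (x i) (x j) * w j := by
      intro i
      have h2 : (∑ j, k (x i) (x j) * -w j) = -∑ j, k (x i) (x j) * w j := by simp
      rw [h2]; ring
    simp only [e1]
    rw [e0, Finset.sum_add_distrib, Finset.sum_neg_distrib]
    ring
  have hwKw : w ⬝ᵥ K.mulVec w = kst ⬝ᵥ w - σ2 * (w ⬝ᵥ w) := by
    have : K.mulVec w = A.mulVec w - σ2 • w := by
      rw [hA, Matrix.add_mulVec, Matrix.smul_mulVec, Matrix.one_mulVec]
      abel
    rw [this, hAw]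
    simp [dotProduct_sub, dotProduct_smul, smul_eq_mul]
    have : kst ⬝ᵥ w = w ⬝ᵥ kst := dotProduct_comm _ _
    rw [← this]
  have hww : 0 ≤ w ⬝ᵥ w := by
    simp [dotProduct]
    exact Finset.sum_nonneg fun i _ => mul_self_nonneg _
  have hlow : 0 ≤ k xstar xstar - kst ⬝ᵥ w := by
    have := hG
    rw [hexpand, hwKw] at this
    nlinarith
  exact ⟨hlow, by linarith⟩
end
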